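/- Let G be a group with subgroups B and N such that (B,N) is a BN-pair with Weyl group W = N/(B∩N). Then G admits the Bruhat decomposition: G is the disjoint union over w ∈ W of the double cosets BwB. -/

import Mathlib

variable {G : Type*} [Group G]

/-- The double coset `BwB ⊆ G` attached to an element `w` of the Weyl group
`W = N/(B ∩ N)` of a BN-pair `(B, N)` in `G`. -/
def bruhatCell (B N : Subgroup G) (w : N ⧸ (B ⊓ N).subgroupOf N) : Set G :=
  {g | ∃ (b₁ b₂ : B) (n : N),
    (QuotientGroup.mk n : N ⧸ (B ⊓ N).subgroupOf N) = w ∧ g = b₁ * n * b₂}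

section Aux

variable (B N : Subgroup G)

lemma mem_cell_mk (n : N) : (↑n : G) ∈ bruhatCell B N (QuotientGroup.mk n) :=
  ⟨1, 1, n, rfl, by simp⟩

lemma cell_mul_left (b : B) {w : N ⧸ (B ⊓ N).subgroupOf N} {x : G}
    (hx : x ∈ bruhatCell B N w) : (↑b : G) * x ∈ bruhatCell B N w := by
  obtain ⟨b₁, b₂, n, hn, rfl⟩ := hx
  exact ⟨b * b₁, b₂, n, hn, by simp [mul_assoc]⟩

lemma cell_subset {w w' : N ⧸ (B ⊓ N).subgroupOf N} {x : G}
    (hx : x ∈ bruhatCell B N w) (hx' : x ∈ bruhatCell B N w') :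
    bruhatCell B N w ⊆ bruhatCell B N w' := by
  obtain ⟨b₁, b₂, n, hn, hxe⟩ := hx
  obtain ⟨b₁', b₂', n', hn', hxe'⟩ := hx'
  rintro y ⟨c₁, c₂, m, hm, rfl⟩
  have hnm : (QuotientGroup.mk n : N ⧸ (B ⊓ N).subgroupOf N) = QuotientGroup.mk m :=
    hn.trans hm.symm
  rw [QuotientGroup.eq] at hnm
  have htB : ((↑(n⁻¹ * m) : N) : G) ∈ B := (Subgroup.mem_subgroupOf.1 hnm).1
  have hmG : ((m : N) : G) = (n : G) * ((↑(n⁻¹ * m) : N) : G) := by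
    push_cast; group
  have hnG : ((n : N) : G) = (↑b₁)⁻¹ * ((↑b₁' : G) * ↑n' * ↑b₂') * (↑b₂)⁻¹ := by
    rw [← hxe', hxe]; group
  refine ⟨c₁ * b₁⁻¹ * b₁', b₂' * b₂⁻¹ * ⟨_, htB⟩ * c₂, n', hn', ?_⟩
  push_cast
  rw [hmG, hnG]
  group

lemma cell_split {s v : N ⧸ (B ⊓ N).subgroupOf N} {x : G}
    [((B ⊓ N).subgroupOf N).Normal]
    (hx : x ∈ bruhatCell B N (s * v)) :
    ∃ a ∈ bruhatCell B N s, ∃ c ∈ bruhatCell B N v, x = a * c := by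
  obtain ⟨ns, hns⟩ := QuotientGroup.mk_surjective s
  obtain ⟨nv, hnv⟩ := QuotientGroup.mk_surjective v
  obtain ⟨b₁, b₂, n, hn, rfl⟩ := hx
  have hnm : (QuotientGroup.mk (ns * nv) : N ⧸ (B ⊓ N).subgroupOf N) = QuotientGroup.mk n := by
    rw [QuotientGroup.mk_mul, hns, hnv, hn]
  rw [QuotientGroup.eq] at hnm
  set t : N := (ns * nv)⁻¹ * n with ht
  have hvt : (QuotientGroup.mk (nv * t) : N ⧸ (B ⊓ N).subgroupOf N) = v := by
    rw [QuotientGroup.mk_mul, hnv, (QuotientGroup.eq_one_iff t).2 hnm, mul_one]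
  refine ⟨↑b₁ * ↑ns, ⟨b₁, 1, ns, hns, by simp⟩,
    ↑(nv * t) * ↑b₂, ⟨1, b₂, nv * t, hvt, by simp⟩, ?_⟩
  have hng : ((n : N) : G) = (ns : G) * ((↑(nv * t) : N) : G) := by
    rw [ht]; push_cast; group
  rw [hng]; group

lemma mem_B_of_mem_cell_one [((B ⊓ N).subgroupOf N).Normal] {x : G}
    (hx : x ∈ bruhatCell B N 1) : x ∈ B := by
  obtain ⟨b₁, b₂, n, hn, rfl⟩ := hx
  have : (n : G) ∈ B := ((Subgroup.mem_subgroupOf.1 ((QuotientGroup.eq_one_iff n).1 hn)) : (n:G) ∈ B ⊓ N).1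
  exact mul_mem (mul_mem b₁.2 this) b₂.2

lemma eq_one_of_mem_cell [((B ⊓ N).subgroupOf N).Normal] {x : G}
    {w : N ⧸ (B ⊓ N).subgroupOf N} (hxB : x ∈ B) (hx : x ∈ bruhatCell B N w) : w = 1 := by
  obtain ⟨b₁, b₂, n, hn, rfl⟩ := hx
  have hnB : (n : G) ∈ B := by
    have : (n : G) = (↑b₁)⁻¹ * (↑b₁ * ↑n * ↑b₂) * (↑b₂)⁻¹ := by group
    rw [this]
    exact mul_mem (mul_mem (inv_mem b₁.2) hxB) (inv_mem b₂.2)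
  rw [← hn]
  exact (QuotientGroup.eq_one_iff n).2 (Subgroup.mem_subgroupOf.2 ⟨hnB, n.2⟩)

lemma words_exist [((B ⊓ N).subgroupOf N).Normal] {S : Set (N ⧸ (B ⊓ N).subgroupOf N)}
    (hSgen : Subgroup.closure S = ⊤)
    (hSinv : ∀ s ∈ S, s * s = 1 ∧ s ≠ 1) (w : N ⧸ (B ⊓ N).subgroupOf N) :
    ∃ l : List (N ⧸ (B ⊓ N).subgroupOf N), (∀ x ∈ l, x ∈ S) ∧ l.prod = w := by
  have hw : w ∈ Subgroup.closure S := by rw [hSgen]; exact Subgroup.mem_top w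
  induction hw using Subgroup.closure_induction with
  | mem x hx => exact ⟨[x], by simpa using hx, by simp⟩
  | one => exact ⟨[], by simp, rfl⟩
  | mul x y _ _ ihx ihy =>
    obtain ⟨l₁, h₁, hp₁⟩ := ihx
    obtain ⟨l₂, h₂, hp₂⟩ := ihy
    refine ⟨l₁ ++ l₂, ?_, by rw [List.prod_append, hp₁, hp₂]⟩
    intro z hz
    rcases List.mem_append.1 hz with h | h
    exacts [h₁ z h, h₂ z h]
  | inv x hx ihx =>
    obtain ⟨l, hl, hp⟩ := ihx
    refine ⟨l.reverse, fun z hz => hl z (List.mem_reverse.1 hz), ?_⟩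
    have : List.map (fun a => a⁻¹) l = l := by
      apply List.map_congr_left ?_ |>.trans (List.map_id l)
      intro a ha
      exact inv_eq_of_mul_eq_one_right (hSinv a (hl a ha)).1
    rw [← hp, List.prod_inv_reverse, this]

end Aux

/-- word length with respect to a generating set -/
noncomputable def wordLen {M : Type*} [Monoid M] (S : Set M) (w : M) : ℕ :=
  sInf {n | ∃ l : List M, l.length = n ∧ (∀ x ∈ l, x ∈ S) ∧ l.prod = w}

/-- Let `G` be a group with subgroups `B` and `N` forming a BN-pair, with
Weyl group `W = N/(B ∩ N)` generated by a set `S` of involutions, satisfying the Tits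
system axioms (`B, N` generate `G`, `T = B ∩ N` is normal in `N`,
`BsB·BwB ⊆ BswB ∪ BwB` and `sBs ≠ B` for `s ∈ S`). Then `G` admits the Bruhat
decomposition: `G` is the disjoint union over `w ∈ W` of the double cosets `BwB`. -/
theorem stmt_17 (B N : Subgroup G) [((B ⊓ N).subgroupOf N).Normal]
    (S : Set (N ⧸ (B ⊓ N).subgroupOf N))
    -- `B` and `N` generate `G` :
    (hgen : Subgroup.closure ((B : Set G) ∪ (N : Set G)) = ⊤)
    -- `W` is generated by the set `S` of involutions :
    (hSgen : Subgroup.closure S = ⊤)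
    (hSinv : ∀ s ∈ S, s * s = 1 ∧ s ≠ 1)
    -- axiom (BN1): `BsB·BwB ⊆ BswB ∪ BwB` :
    (hBN1 : ∀ s ∈ S, ∀ w, ∀ g ∈ bruhatCell B N s, ∀ h ∈ bruhatCell B N w,
      g * h ∈ bruhatCell B N (s * w) ∪ bruhatCell B N w)
    -- axiom (BN2): `sBs ≰ B` for `s ∈ S` :
    (hBN2 : ∀ n : N, (QuotientGroup.mk n : N ⧸ (B ⊓ N).subgroupOf N) ∈ S →
      ∃ b : B, (n : G) * b * (n : G)⁻¹ ∉ B) :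
    (⋃ w, bruhatCell B N w) = Set.univ ∧
    ∀ w w', (bruhatCell B N w ∩ bruhatCell B N w').Nonempty → w = w' := by
  -- closure of products of cells
  have key_mul : ∀ (l : List (N ⧸ (B ⊓ N).subgroupOf N)) (w w' : N ⧸ (B ⊓ N).subgroupOf N) (x y : G), (∀ s ∈ l, s ∈ S) → l.prod = w →
      x ∈ bruhatCell B N w → y ∈ bruhatCell B N w' → ∃ u, x * y ∈ bruhatCell B N u := by
    intro l
    induction l with
    | nil =>
      intro w w' x y _ hp hx hy
      have hw1 : w = 1 := hp.symm
      have hxB : x ∈ B := mem_B_of_mem_cell_one B N (hw1 ▸ hx)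
      exact ⟨w', cell_mul_left B N ⟨x, hxB⟩ hy⟩
    | cons s l IH =>
      intro w w' x y hlS hp hx hy
      have hs : s ∈ S := hlS s List.mem_cons_self
      have hw : w = s * l.prod := by rw [← hp, List.prod_cons]
      obtain ⟨a, ha, c, hc, rfl⟩ := cell_split B N (hw ▸ hx)
      obtain ⟨u, hu⟩ := IH l.prod w' c y (fun z hz => hlS z (List.mem_cons_of_mem s hz)) rfl hc hy
      rcases hBN1 s hs u a ha (c * y) hu with h | h
      · exact ⟨s * u, by rwa [mul_assoc]⟩
      · exact ⟨u, by rwa [mul_assoc]⟩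
  -- disjointness, by strong induction on word length
  have disj : ∀ (k : ℕ) (w w' : N ⧸ (B ⊓ N).subgroupOf N), wordLen S w ≤ k → wordLen S w ≤ wordLen S w' →
      (bruhatCell B N w ∩ bruhatCell B N w').Nonempty → w = w' := by
    intro k
    induction k using Nat.strong_induction_on with
    | _ k IH =>
    rintro w w' hk hle ⟨x, hxw, hxw'⟩
    have hne : {n | ∃ l : List (N ⧸ (B ⊓ N).subgroupOf N), l.length = n ∧ (∀ x ∈ l, x ∈ S) ∧ l.prod = w}.Nonempty := by
      obtain ⟨l, hl, hp⟩ := words_exist B N hSgen hSinv w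
      exact ⟨l.length, l, rfl, hl, hp⟩
    obtain ⟨l, hlen, hlS, hlp⟩ := Nat.sInf_mem hne
    match l, hlen, hlS, hlp with
    | [], hlen, hlS, hlp =>
      -- w = 1
      have hw1 : w = 1 := hlp.symm
      have hxB : x ∈ B := mem_B_of_mem_cell_one B N (hw1 ▸ hxw)
      rw [hw1, eq_one_of_mem_cell B N hxB hxw']
    | s :: l', hlen, hlS, hlp =>
      have hs : s ∈ S := hlS s List.mem_cons_self
      have hss : s * s = 1 := (hSinv s hs).1
      set v := l'.prod with hv
      have hwsv : w = s * v := by rw [← hlp, List.prod_cons]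
      have hvlen : wordLen S v ≤ l'.length :=
        Nat.sInf_le ⟨l', rfl, fun z hz => hlS z (List.mem_cons_of_mem s hz), rfl⟩
      have hwlen : wordLen S w = l'.length + 1 := by
        rw [wordLen, ← hlen]; rfl
      -- construct an element of cell v inside cell (s*w') ∪ cell w'
      obtain ⟨ns, hns⟩ := QuotientGroup.mk_surjective s
      obtain ⟨nw, hnw⟩ := QuotientGroup.mk_surjective w
      have hnsc : (↑ns : G) ∈ bruhatCell B N s := hns ▸ mem_cell_mk B N ns
      have hnwc : (↑nw : G) ∈ bruhatCell B N w' :=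
        cell_subset B N hxw hxw' (hnw ▸ mem_cell_mk B N nw)
      have hz := hBN1 s hs w' (↑ns) hnsc (↑nw) hnwc
      have hzv : (↑ns : G) * ↑nw ∈ bruhatCell B N v := by
        have h1 : (↑ns : G) * ↑nw = ((ns * nw : N) : G) := by push_cast; rfl
        have h2 : (QuotientGroup.mk (ns * nw) : N ⧸ (B ⊓ N).subgroupOf N) = v := by
          rw [QuotientGroup.mk_mul, hns, hnw, hwsv, ← mul_assoc, hss, one_mul]
        rw [h1, ← h2]
        exact mem_cell_mk B N (ns * nw)
      have hfacts : wordLen S w ≤ k := hk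
      have hlt : l'.length < k := by omega
      rcases hz with hz | hz
      · -- cell v meets cell (s * w') : v = s * w', so w = w'
        have hvsw : v = s * w' := by
          rcases le_total (wordLen S v) (wordLen S (s * w')) with h | h
          · exact IH l'.length hlt v (s * w') hvlen h ⟨_, hzv, hz⟩
          · exact (IH (wordLen S (s * w')) (by omega) (s * w') v le_rfl h ⟨_, hz, hzv⟩).symm
        rw [hwsv, hvsw, ← mul_assoc, hss, one_mul]
      · -- cell v meets cell w' : v = w', contradiction with lengths
        have hvw : v = w' := by
          rcases le_total (wordLen S v) (wordLen S w') with h | h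
          · exact IH l'.length hlt v w' hvlen h ⟨_, hzv, hz⟩
          · exact (IH (wordLen S w') (by omega) w' v le_rfl h ⟨_, hz, hzv⟩).symm
        exfalso
        rw [← hvw] at hle
        omega
  constructor
  · -- coverage
    rw [Set.eq_univ_iff_forall]
    intro g
    rw [Set.mem_iUnion]
    let K : Subgroup G :=
      { carrier := {g | ∃ u, g ∈ bruhatCell B N u}
        one_mem' := ⟨1, (1 : B), (1 : B), (1 : N), QuotientGroup.mk_one _, by simp⟩
        mul_mem' := by
          rintro x y ⟨u, hx⟩ ⟨u', hy⟩
          obtain ⟨l, hl, hp⟩ := words_exist B N hSgen hSinv u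
          exact key_mul l u u' x y hl hp hx hy
        inv_mem' := by
          rintro x ⟨u, b₁, b₂, n, hn, rfl⟩
          refine ⟨u⁻¹, b₂⁻¹, b₁⁻¹, n⁻¹, ?_, by push_cast; group⟩
          rw [QuotientGroup.mk_inv, hn] }
    have hsub : Subgroup.closure ((B : Set G) ∪ (N : Set G)) ≤ K := by
      apply Subgroup.closure_le _ |>.2
      rintro x (hx | hx)
      · exact ⟨1, ⟨x, hx⟩, 1, 1, QuotientGroup.mk_one _, by simp⟩
      · exact ⟨QuotientGroup.mk ⟨x, hx⟩, mem_cell_mk B N ⟨x, hx⟩⟩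
    exact hsub (hgen ▸ Subgroup.mem_top g)
  · -- disjointness
    intro w w' hww'
    rcases le_total (wordLen S w) (wordLen S w') with h | h
    · exact disj (wordLen S w) w w' le_rfl h hww'
    · exact (disj (wordLen S w') w' w le_rfl h ⟨hww'.choose, hww'.choose_spec.2, hww'.choose_spec.1⟩).symm
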